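/- Assume hypotheses (H1)–(H3) for a smooth Hamiltonian H on the slow–fast phase space M = ℝ^{2r} × ℝ^{2k}, with momentum map J satisfying the adiabatic condition ⟨d₁J⟩ = 0. Then the S¹-action generated by Υ := (1/ω)X_H^{(0)} is Hamiltonian with respect to the averaged form: for every ε ≠ 0, every m ∈ M and every v ∈ ℝ^{2r+2k}, ⟨σ_ε⟩_m(Υ(m), v) = −DJ_m(v), i.e. i_Υ⟨σ_ε⟩ = −dJ. -/

import Mathlib

open Real MeasureTheory Asymptotics Set

noncomputable section

/-- Fast factor `ℝ^{2r}` with variables `(y, x)`. -/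
abbrev Fast (r : ℕ) := (Fin r → ℝ) × (Fin r → ℝ)

/-- Slow factor `ℝ^{2k}` with variables `(p, q)`. -/
abbrev Slow (k : ℕ) := (Fin k → ℝ) × (Fin k → ℝ)

/-- The slow-fast phase space `M = ℝ^{2r} × ℝ^{2k}`. -/
abbrev SF (r k : ℕ) := Fast r × Slow k

/-- The fast Hamiltonian vector field `X_H^{(0)}`: `ẏ = -∂H/∂x`, `ẋ = ∂H/∂y`,
zero slow components. -/
def fastVF {r k : ℕ} (H : SF r k → ℝ) (m : SF r k) : SF r k :=
  ((fun i => -(fderiv ℝ H m ((0, Pi.single i 1), 0)),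
    fun i => fderiv ℝ H m ((Pi.single i 1, 0), 0)), 0)

/-- The slow Hamiltonian vector field `X_H^{(1)}`: `ṗ = -∂H/∂q`, `q̇ = ∂H/∂p`,
zero fast components. -/
def slowVF {r k : ℕ} (H : SF r k → ℝ) (m : SF r k) : SF r k :=
  (0, (fun j => -(fderiv ℝ H m (0, (0, Pi.single j 1))),
       fun j => fderiv ℝ H m (0, (Pi.single j 1, 0))))

/-- The differential of `f` in the slow variables only, `d₁f`, as a 1-form. -/
def d1Form {r k : ℕ} (f : SF r k → ℝ) (m w : SF r k) : ℝ :=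
  fderiv ℝ f m ((0 : Fast r), w.2)

/-- Average `⟨α⟩` of a 1-form `α` along a `2π`-periodic flow `φ`:
`⟨α⟩_m(w) = (1/2π)∫₀^{2π} α_{φ(t,m)}(D_mφ(t,·) w) dt`. -/
def avg1 {r k : ℕ} (φ : ℝ → SF r k → SF r k) (α : SF r k → SF r k → ℝ)
    (m w : SF r k) : ℝ :=
  (1 / (2 * π)) * ∫ t in (0:ℝ)..(2 * π), α (φ t m) (fderiv ℝ (φ t) m w)

/-- Integrating operator `S(α)` on a 1-form `α` along a `2π`-periodic flow `φ`. -/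
def intOp1 {r k : ℕ} (φ : ℝ → SF r k → SF r k) (α : SF r k → SF r k → ℝ)
    (m w : SF r k) : ℝ :=
  (1 / (2 * π)) * ∫ t in (0:ℝ)..(2 * π), (t - π) * α (φ t m) (fderiv ℝ (φ t) m w)

/-- The canonical fast symplectic form `σ₀((u_y,u_x),(v_y,v_x)) = u_y·v_x − u_x·v_y`. -/
def sigma0 {r : ℕ} (u v : Fast r) : ℝ :=
  ∑ i : Fin r, u.1 i * v.2 i - ∑ i : Fin r, u.2 i * v.1 i

/-- The canonical slow symplectic form `σ₁((u_p,u_q),(v_p,v_q)) = u_p·v_q − u_q·v_p`. -/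
def sigma1 {k : ℕ} (u v : Slow k) : ℝ :=
  ∑ j : Fin k, u.1 j * v.2 j - ∑ j : Fin k, u.2 j * v.1 j

/-- The singular symplectic form `σ_ε = π₀^*σ₀ + (1/ε) π₁^*σ₁` on `M`. -/
def sigmaE {r k : ℕ} (ε : ℝ) (u v : SF r k) : ℝ :=
  sigma0 u.1 v.1 + (1 / ε) * sigma1 u.2 v.2

/-- The average of a 2-form `β` along a `2π`-periodic flow `φ`:
`⟨β⟩_m(u,v) = (1/2π)∫₀^{2π} β_{φ(t,m)}(D_mφ(t,·)u, D_mφ(t,·)v) dt`. -/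
def avg2 {r k : ℕ} (φ : ℝ → SF r k → SF r k) (β : SF r k → SF r k → SF r k → ℝ)
    (m u v : SF r k) : ℝ :=
  (1 / (2 * π)) *
    ∫ t in (0:ℝ)..(2 * π), β (φ t m) (fderiv ℝ (φ t) m u) (fderiv ℝ (φ t) m v)


/-! ### Auxiliary lemmas -/

lemma decomp_fast {r k : ℕ} (L : SF r k →L[ℝ] ℝ) (u : Fast r) :
    L (u, (0 : Slow k)) =
      ∑ i : Fin r, u.1 i * L (((Pi.single i 1 : Fin r → ℝ), 0), 0)
        + ∑ i : Fin r, u.2 i * L ((0, (Pi.single i 1 : Fin r → ℝ)), 0) := by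
  have hu : (u, (0 : Slow k)) =
      (∑ i : Fin r, u.1 i • ((((Pi.single i 1 : Fin r → ℝ), 0), 0) : SF r k))
        + ∑ i : Fin r, u.2 i • (((0, (Pi.single i 1 : Fin r → ℝ)), 0) : SF r k) := by
    refine Prod.ext (Prod.ext ?_ ?_) ?_ <;>
      simp [Prod.fst_sum, Prod.snd_sum] <;> funext j <;>
      simp [Finset.sum_apply, Pi.single_apply, mul_ite, Finset.sum_ite_eq']
  rw [hu, map_add, map_sum, map_sum]
  simp only [_root_.map_smul, smul_eq_mul]

lemma fastVF_smooth {r k : ℕ} (H : SF r k → ℝ) (hH : ContDiff ℝ (⊤ : ℕ∞) H) :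
    ContDiff ℝ (⊤ : ℕ∞) (fastVF H) := by
  have hfd : ∀ v : SF r k, ContDiff ℝ (⊤ : ℕ∞) (fun m => fderiv ℝ H m v) := fun v =>
    (ContinuousLinearMap.apply ℝ ℝ v).contDiff.comp
      (hH.fderiv_right (m := (⊤ : ℕ∞)) (by exact_mod_cast le_top))
  refine ContDiff.prodMk (ContDiff.prodMk ?_ ?_) contDiff_const
  · exact contDiff_pi.2 fun i => (hfd _).neg
  · exact contDiff_pi.2 fun i => hfd _

lemma dH_X_zero {r k : ℕ} (H : SF r k → ℝ) (m : SF r k) :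
    fderiv ℝ H m ((fastVF H m).1, (0 : Slow k)) = 0 := by
  rw [decomp_fast]
  simp only [fastVF]
  rw [← Finset.sum_add_distrib]
  exact Finset.sum_eq_zero fun i _ => by ring

lemma dJ_Y_zero {r k : ℕ} (H : SF r k → ℝ) (ω : SF r k → ℝ) (J : SF r k → ℝ)
    (hH2 : ∀ m (u : Fast r),
      fderiv ℝ J m (u, (0 : Slow k)) = (1 / ω m) * fderiv ℝ H m (u, 0)) (p : SF r k) :
    fderiv ℝ J p ((ω p)⁻¹ • fastVF H p) = 0 := by
  have h1 : ((ω p)⁻¹ • fastVF H p : SF r k)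
      = (ω p)⁻¹ • (((fastVF H p).1, (0 : Slow k)) : SF r k) := by
    refine Prod.ext rfl ?_
    simp [fastVF]
  rw [h1, _root_.map_smul, smul_eq_mul, hH2, dH_X_zero, mul_zero, mul_zero]

lemma sigma_eval {r k : ℕ} (H : SF r k → ℝ) (ω : SF r k → ℝ) (J : SF r k → ℝ)
    (hH2 : ∀ m (u : Fast r),
      fderiv ℝ J m (u, (0 : Slow k)) = (1 / ω m) * fderiv ℝ H m (u, 0))
    (ε : ℝ) (p w : SF r k) :
    sigmaE ε ((ω p)⁻¹ • fastVF H p) w = -(fderiv ℝ J p w) + d1Form J p w := by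
  have hw : fderiv ℝ J p w = fderiv ℝ J p (w.1, (0 : Slow k)) + d1Form J p w := by
    rw [d1Form, ← map_add]
    congr 1
    exact Prod.ext (by simp) (by simp)
  rw [hw, hH2 p w.1, decomp_fast (fderiv ℝ H p) w.1]
  simp only [sigmaE, sigma0, sigma1, fastVF, Prod.smul_fst, Prod.smul_snd, Pi.smul_apply,
    smul_eq_mul, smul_zero, Prod.fst_zero, Prod.snd_zero, Pi.zero_apply, zero_mul,
    Finset.sum_const_zero, sub_zero, mul_zero, add_zero]
  have e1 : ∑ i : Fin r, (ω p)⁻¹ * -(fderiv ℝ H p ((0, Pi.single i 1), 0)) * w.1.2 i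
      = -((ω p)⁻¹ * ∑ i : Fin r, w.1.2 i * fderiv ℝ H p ((0, Pi.single i 1), 0)) := by
    rw [Finset.mul_sum, ← Finset.sum_neg_distrib]
    exact Finset.sum_congr rfl fun i _ => by ring
  have e2 : ∑ i : Fin r, (ω p)⁻¹ * fderiv ℝ H p ((Pi.single i 1, 0), 0) * w.1.1 i
      = (ω p)⁻¹ * ∑ i : Fin r, w.1.1 i * fderiv ℝ H p ((Pi.single i 1, 0), 0) := by
    rw [Finset.mul_sum]
    exact Finset.sum_congr rfl fun i _ => by ring
  rw [e1, e2, one_div]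
  ring

lemma upsilon_smooth {r k : ℕ} (H : SF r k → ℝ) (hH : ContDiff ℝ (⊤ : ℕ∞) H)
    (ω : SF r k → ℝ) (hω_smooth : ContDiff ℝ (⊤ : ℕ∞) ω) (hω_pos : ∀ m, 0 < ω m) :
    ContDiff ℝ (⊤ : ℕ∞) (fun m => (ω m)⁻¹ • fastVF H m) :=
  (hω_smooth.inv fun m => (hω_pos m).ne').smul (fastVF_smooth H hH)

lemma phi_hasFDerivAt {r k : ℕ} (φ : ℝ → SF r k → SF r k)
    (hφ_smooth : ContDiff ℝ (⊤ : ℕ∞) (fun p : ℝ × SF r k => φ p.1 p.2))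
    (t : ℝ) (m : SF r k) :
    HasFDerivAt (φ t)
      ((fderiv ℝ (fun p : ℝ × SF r k => φ p.1 p.2) (t, m)).comp
        (ContinuousLinearMap.inr ℝ ℝ (SF r k))) m := by
  have h := (hφ_smooth.differentiable (by simp) (t, m)).hasFDerivAt
  exact h.comp m (hasFDerivAt_prodMk_right t m)

lemma phi_differentiable {r k : ℕ} (φ : ℝ → SF r k → SF r k)
    (hφ_smooth : ContDiff ℝ (⊤ : ℕ∞) (fun p : ℝ × SF r k => φ p.1 p.2)) (t : ℝ) :
    Differentiable ℝ (φ t) :=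
  fun m => (phi_hasFDerivAt φ hφ_smooth t m).differentiableAt

lemma flow_group {r k : ℕ} (H : SF r k → ℝ) (hH : ContDiff ℝ (⊤ : ℕ∞) H)
    (ω : SF r k → ℝ) (hω_smooth : ContDiff ℝ (⊤ : ℕ∞) ω) (hω_pos : ∀ m, 0 < ω m)
    (φ : ℝ → SF r k → SF r k)
    (hφ_smooth : ContDiff ℝ (⊤ : ℕ∞) (fun p : ℝ × SF r k => φ p.1 p.2))
    (hφ0 : ∀ m, φ 0 m = m)
    (hφ' : ∀ t m, HasDerivAt (fun s => φ s m) ((ω (φ t m))⁻¹ • fastVF H (φ t m)) t) :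
    ∀ (t s : ℝ) (m : SF r k), φ t (φ s m) = φ (t + s) m := by
  intro t s m
  set Υ : SF r k → SF r k := fun p => (ω p)⁻¹ • fastVF H p with hΥ
  have hΥs : ContDiff ℝ (⊤ : ℕ∞) Υ := upsilon_smooth H hH ω hω_smooth hω_pos
  set f : ℝ → SF r k := fun τ => φ τ (φ s m) with hf
  set g : ℝ → SF r k := fun τ => φ (τ + s) m with hg
  have hf' : ∀ τ, HasDerivAt f (Υ (f τ)) τ := fun τ => hφ' τ (φ s m)
  have hg' : ∀ τ, HasDerivAt g (Υ (g τ)) τ := by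
    intro τ
    have h2 : HasDerivAt (fun τ' : ℝ => τ' + s) 1 τ := (hasDerivAt_id τ).add_const s
    have h1 := (hφ' (τ + s) m).scomp τ h2
    rw [one_smul] at h1
    exact h1
  have hfc : Continuous f :=
    hφ_smooth.continuous.comp (continuous_id.prodMk continuous_const)
  have hgc : Continuous g :=
    hφ_smooth.continuous.comp (((continuous_id.add continuous_const)).prodMk continuous_const)
  set T : ℝ := |t| + 1 with hT
  have hTpos : 0 < T := by positivity
  have htmem : t ∈ Icc (-T) T := by
    constructor
    · nlinarith [abs_nonneg t, neg_abs_le t]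
    · nlinarith [le_abs_self t]
  obtain ⟨R, hR⟩ : ∃ R, (f '' Icc (-T) T ∪ g '' Icc (-T) T) ⊆ Metric.closedBall 0 R :=
    ((isCompact_Icc.image hfc).union (isCompact_Icc.image hgc)).isBounded.subset_closedBall 0
  obtain ⟨C, hC⟩ : ∃ C : ℝ, ∀ x ∈ Metric.closedBall (0 : SF r k) R, ‖fderiv ℝ Υ x‖ ≤ C := by
    obtain ⟨C, hC⟩ := (isCompact_closedBall (0 : SF r k) R).exists_bound_of_continuousOn
      ((hΥs.continuous_fderiv (by simp)).continuousOn)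
    exact ⟨C, hC⟩
  set K : NNReal := ⟨max C 0, le_max_right _ _⟩ with hK
  have hLip : LipschitzOnWith K Υ (Metric.closedBall 0 R) := by
    apply Convex.lipschitzOnWith_of_nnnorm_fderiv_le
      (fun x _ => (hΥs.differentiable (by simp)) x) ?_ (convex_closedBall _ _)
    intro x hx
    rw [← NNReal.coe_le_coe, coe_nnnorm]
    exact le_trans (hC x hx) (le_max_left _ _)
  have key : EqOn f g (Icc (-T) T) := by
    apply ODE_solution_unique_of_mem_Icc (v := fun _ x => Υ x)
      (s := fun _ => Metric.closedBall (0 : SF r k) R) (fun _ _ => hLip)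
      (t₀ := 0) (Set.mem_Ioo.2 ⟨by linarith, hTpos⟩)
      hfc.continuousOn (fun τ _ => hf' τ)
      (fun τ hτ => hR (Set.mem_union_left _ (Set.mem_image_of_mem f (Ioo_subset_Icc_self hτ))))
      hgc.continuousOn (fun τ _ => hg' τ)
      (fun τ hτ => hR (Set.mem_union_right _ (Set.mem_image_of_mem g (Ioo_subset_Icc_self hτ))))
      ?_
    show f 0 = g 0
    simp [hf, hg, hφ0]
  exact key htmem

lemma push_upsilon {r k : ℕ} (H : SF r k → ℝ) (hH : ContDiff ℝ (⊤ : ℕ∞) H)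
    (ω : SF r k → ℝ) (hω_smooth : ContDiff ℝ (⊤ : ℕ∞) ω) (hω_pos : ∀ m, 0 < ω m)
    (φ : ℝ → SF r k → SF r k)
    (hφ_smooth : ContDiff ℝ (⊤ : ℕ∞) (fun p : ℝ × SF r k => φ p.1 p.2))
    (hφ0 : ∀ m, φ 0 m = m)
    (hφ' : ∀ t m, HasDerivAt (fun s => φ s m) ((ω (φ t m))⁻¹ • fastVF H (φ t m)) t) :
    ∀ (t : ℝ) (m : SF r k),
      fderiv ℝ (φ t) m ((ω m)⁻¹ • fastVF H m) = (ω (φ t m))⁻¹ • fastVF H (φ t m) := by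
  intro t m
  have hdiff : Differentiable ℝ (φ t) := phi_differentiable φ hφ_smooth t
  have hd : HasFDerivAt (φ t) (fderiv ℝ (φ t) m) (φ 0 m) := by
    rw [hφ0]; exact (hdiff m).hasFDerivAt
  have h1 : HasDerivAt (fun s => φ t (φ s m))
      (fderiv ℝ (φ t) m ((ω m)⁻¹ • fastVF H m)) 0 := by
    have h1' := hd.comp_hasDerivAt 0 (hφ' 0 m)
    rw [hφ0 m] at h1'
    exact h1'
  have h2 : HasDerivAt (fun s => φ (t + s) m) ((ω (φ t m))⁻¹ • fastVF H (φ t m)) 0 := by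
    have hin : HasDerivAt (fun s : ℝ => t + s) 1 0 := by
      simpa using (hasDerivAt_id (0 : ℝ)).const_add t
    have hout := hφ' (t + 0) m
    have := hout.scomp 0 hin
    simp only [one_smul, add_zero] at this
    exact this
  have heq : (fun s => φ t (φ s m)) = fun s => φ (t + s) m := by
    funext s
    exact flow_group H hH ω hω_smooth hω_pos φ hφ_smooth hφ0 hφ' t s m
  rw [heq] at h1
  exact h1.unique h2

lemma J_invariant {r k : ℕ} (H : SF r k → ℝ)
    (ω : SF r k → ℝ)
    (φ : ℝ → SF r k → SF r k)
    (hφ0 : ∀ m, φ 0 m = m)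
    (hφ' : ∀ t m, HasDerivAt (fun s => φ s m) ((ω (φ t m))⁻¹ • fastVF H (φ t m)) t)
    (J : SF r k → ℝ) (hJ_smooth : ContDiff ℝ (⊤ : ℕ∞) J)
    (hH2 : ∀ m (u : Fast r),
      fderiv ℝ J m (u, (0 : Slow k)) = (1 / ω m) * fderiv ℝ H m (u, 0)) :
    ∀ (t : ℝ) (m : SF r k), J (φ t m) = J m := by
  intro t m
  have hder : ∀ τ : ℝ, HasDerivAt (fun u => J (φ u m)) 0 τ := by
    intro τ
    have h1 := ((hJ_smooth.differentiable (by simp)) (φ τ m)).hasFDerivAt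
    have h2 := h1.comp_hasDerivAt τ (hφ' τ m)
    rwa [dJ_Y_zero H ω J hH2 (φ τ m)] at h2
  have hconst : (fun u => J (φ u m)) t = (fun u => J (φ u m)) 0 :=
    is_const_of_deriv_eq_zero (fun τ => (hder τ).differentiableAt)
      (fun τ => (hder τ).deriv) t 0
  simpa [hφ0 m] using hconst

lemma chain_J {r k : ℕ} (H : SF r k → ℝ)
    (ω : SF r k → ℝ)
    (φ : ℝ → SF r k → SF r k)
    (hφ_smooth : ContDiff ℝ (⊤ : ℕ∞) (fun p : ℝ × SF r k => φ p.1 p.2))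
    (hφ0 : ∀ m, φ 0 m = m)
    (hφ' : ∀ t m, HasDerivAt (fun s => φ s m) ((ω (φ t m))⁻¹ • fastVF H (φ t m)) t)
    (J : SF r k → ℝ) (hJ_smooth : ContDiff ℝ (⊤ : ℕ∞) J)
    (hH2 : ∀ m (u : Fast r),
      fderiv ℝ J m (u, (0 : Slow k)) = (1 / ω m) * fderiv ℝ H m (u, 0)) :
    ∀ (t : ℝ) (m v : SF r k),
      fderiv ℝ J (φ t m) (fderiv ℝ (φ t) m v) = fderiv ℝ J m v := by
  intro t m v
  have hJd := hJ_smooth.differentiable (by simp)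
  have h1 : HasFDerivAt (J ∘ φ t)
      ((fderiv ℝ J (φ t m)).comp (fderiv ℝ (φ t) m)) m :=
    (hJd (φ t m)).hasFDerivAt.comp m (phi_differentiable φ hφ_smooth t m).hasFDerivAt
  have h2 : J ∘ φ t = J := funext fun m' =>
    J_invariant H ω φ hφ0 hφ' J hJ_smooth hH2 t m'
  rw [h2] at h1
  have h3 : fderiv ℝ J m = (fderiv ℝ J (φ t m)).comp (fderiv ℝ (φ t) m) := h1.fderiv
  rw [← ContinuousLinearMap.comp_apply, ← h3]

/-- Under hypotheses (H1)-(H3), the `S¹`-action generated by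
`Υ = (1/ω)X_H^{(0)}` is Hamiltonian for the averaged form, with momentum map `J`:
`i_Υ⟨σ_ε⟩ = −dJ` for every `ε ≠ 0`. -/
theorem stmt13 {r k : ℕ} (H : SF r k → ℝ) (hH : ContDiff ℝ (⊤ : ℕ∞) H)
    (ω : SF r k → ℝ) (hω_smooth : ContDiff ℝ (⊤ : ℕ∞) ω) (hω_pos : ∀ m, 0 < ω m)
    (φ : ℝ → SF r k → SF r k)
    (hφ_smooth : ContDiff ℝ (⊤ : ℕ∞) (fun p : ℝ × SF r k => φ p.1 p.2))
    (hφ0 : ∀ m, φ 0 m = m)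
    (hφ' : ∀ t m, HasDerivAt (fun s => φ s m) ((ω (φ t m))⁻¹ • fastVF H (φ t m)) t)
    (hper : ∀ t m, φ (t + 2 * π) m = φ t m)
    (J : SF r k → ℝ) (hJ_smooth : ContDiff ℝ (⊤ : ℕ∞) J)
    (hH2 : ∀ m (u : Fast r),
      fderiv ℝ J m (u, (0 : Slow k)) = (1 / ω m) * fderiv ℝ H m (u, 0))
    (hH3 : ∀ m w, avg1 φ (d1Form J) m w = 0) :
    ∀ ε : ℝ, ε ≠ 0 → ∀ m v,
      avg2 φ (fun _ => sigmaE ε) m ((ω m)⁻¹ • fastVF H m) v = -(fderiv ℝ J m v) := by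
  intro ε hε m v
  have hpush := push_upsilon H hH ω hω_smooth hω_pos φ hφ_smooth hφ0 hφ'
  have hchain := chain_J H ω φ hφ_smooth hφ0 hφ' J hJ_smooth hH2
  have hφtm : Continuous (fun t => φ t m) :=
    hφ_smooth.continuous.comp (continuous_id.prodMk continuous_const)
  have hfdv : Continuous (fun t => fderiv ℝ (φ t) m v) := by
    have heq : (fun t => fderiv ℝ (φ t) m v)
        = fun t => (fderiv ℝ (fun p : ℝ × SF r k => φ p.1 p.2) (t, m)) ((0 : ℝ), v) := by
      funext t
      rw [(phi_hasFDerivAt φ hφ_smooth t m).fderiv]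
      rfl
    rw [heq]
    exact ((hφ_smooth.continuous_fderiv (by simp)).comp
      (continuous_id.prodMk continuous_const)).clm_apply continuous_const
  have hgcont : Continuous (fun t => d1Form J (φ t m) (fderiv ℝ (φ t) m v)) := by
    simp only [d1Form]
    exact ((hJ_smooth.continuous_fderiv (by simp)).comp hφtm).clm_apply
      (continuous_const.prodMk hfdv.snd)
  have hint : ∫ t in (0:ℝ)..(2 * π),
        (fun _ => sigmaE ε) (φ t m) (fderiv ℝ (φ t) m ((ω m)⁻¹ • fastVF H m))
          (fderiv ℝ (φ t) m v)
      = ∫ t in (0:ℝ)..(2 * π),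
          (-(fderiv ℝ J m v) + d1Form J (φ t m) (fderiv ℝ (φ t) m v)) := by
    refine intervalIntegral.integral_congr fun t _ => ?_
    show sigmaE ε (fderiv ℝ (φ t) m ((ω m)⁻¹ • fastVF H m)) (fderiv ℝ (φ t) m v) = _
    rw [hpush t m, sigma_eval H ω J hH2 ε (φ t m) (fderiv ℝ (φ t) m v), hchain t m v]
  simp only [avg2]
  rw [hint, intervalIntegral.integral_add intervalIntegrable_const
    (hgcont.intervalIntegrable _ _), intervalIntegral.integral_const, mul_add]
  have h3 := hH3 m v
  rw [avg1] at h3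
  rw [h3, add_zero, smul_eq_mul, sub_zero]
  have hπ : (2 : ℝ) * π ≠ 0 := by positivity
  field_simp
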